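/- Let MAJ : {0,1}^n × {0,1}^n → {0,1} be the majority function, MAJ(x,y) = 1 if and only if Σ_i x_i y_i ≥ ⌈n/2⌉. MAJ is injective for Bob when restricted to inputs y of Hamming weight at least ⌈n/2⌉ (for any two distinct such y, y' there is an x with MAJ(x,y) ≠ MAJ(x,y')); since there are at least 2^{n−1} such strings y, the garden-hose complexity s = GH(MAJ) satisfies s · log₂(s) ≥ n − 1, hence GH(MAJ) ∈ Ω(n / log n). -/

import Mathlib

/-- A partial matching on the vertex type `V`, encoded by a partner function:
`m i = some j` means that there is an edge between `i` and `j`;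
the graph `{ {i,j} | m i = some j }` then has maximum degree at most `1`
and no self-loops. -/
def IsPartialMatching {V : Type*} (m : V → Option V) : Prop :=
  ∀ i j, m i = some j → i ≠ j ∧ m j = some i

/-- The position of the water in a garden-hose game with `s` pipes:
`atAlice i` (resp. `atBob i`) means the water has just arrived at Alice's
(resp. Bob's) end of pipe `i`; `exitA` / `exitB` mean the water has exited
on Alice's / Bob's side, i.e. the maximal path starting at the tap has ended
in `A∘` / in `B`. -/
inductive GHState (s : ℕ) where
  | atAlice : Fin s → GHState s
  | atBob : Fin s → GHState s
  | exitA : GHState s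
  | exitB : GHState s
  deriving DecidableEq

/-- Vertex `k` of `A∘ = {0, 1, ..., s}` viewed as a pipe: vertex `0` is the water
tap (no pipe), and vertex `i + 1` is Alice's end of pipe `i`. -/
def toPipe {s : ℕ} (k : Fin (s + 1)) : Option (Fin s) :=
  if h : (k : ℕ) = 0 then none
  else some ⟨(k : ℕ) - 1, by have := k.isLt; omega⟩

/-- One step of the water flow, given Alice's connections `a` on `A∘ = {0,...,s}`
and Bob's connections `b` on `B = {1,...,s}` (indexed by pipes `Fin s`). -/
def ghStep {s : ℕ} (a : Fin (s + 1) → Option (Fin (s + 1)))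
    (b : Fin s → Option (Fin s)) : GHState s → GHState s
  | GHState.atAlice i =>
    match a i.succ with
    | none => GHState.exitA
    | some k =>
      match toPipe k with
      | none => GHState.exitA
      | some p => GHState.atBob p
  | GHState.atBob i =>
    match b i with
    | none => GHState.exitB
    | some j => GHState.atAlice j
  | GHState.exitA => GHState.exitA
  | GHState.exitB => GHState.exitB

/-- The start of the water flow: the tap (vertex `0` of `A∘`) is connected by
Alice to at most one pipe. -/
def ghStart {s : ℕ} (a : Fin (s + 1) → Option (Fin (s + 1))) : GHState s :=
  match a 0 with
  | none => GHState.exitA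
  | some k =>
    match toPipe k with
    | none => GHState.exitA
    | some p => GHState.atBob p

/-- The endpoint of the maximal path `π(x,y)` starting at the tap: since the graph
has maximum degree `2` and the path is simple, it is reached after at most
`2s + 2` steps. -/
def ghResult {s : ℕ} (a : Fin (s + 1) → Option (Fin (s + 1)))
    (b : Fin s → Option (Fin s)) : GHState s :=
  (ghStep a b)^[2 * s + 2] (ghStart a)

/-- A garden-hose game of size `s` on inputs `{0,1}^n × {0,1}^n`: for every input
`x` Alice chooses a partial matching `EA x` on `A∘ = {0,1,…,s}` and for every
input `y` Bob chooses a partial matching `EB y` on `B = {1,…,s}`. -/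
structure GHGame (n s : ℕ) where
  EA : (Fin n → Bool) → Fin (s + 1) → Option (Fin (s + 1))
  EB : (Fin n → Bool) → Fin s → Option (Fin s)
  matchA : ∀ x, IsPartialMatching (EA x)
  matchB : ∀ y, IsPartialMatching (EB y)

/-- Where the water exits on input `(x, y)`. -/
def GHGame.run {n s : ℕ} (G : GHGame n s) (x y : Fin n → Bool) : GHState s :=
  ghResult (G.EA x) (G.EB y)

/-- The game `G` computes `f` if for all inputs the maximal path from the tap ends
in `A∘` whenever `f x y = 0` (water exits on Alice's side) and in `B` whenever
`f x y = 1` (water exits on Bob's side). -/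
def GHGame.Computes {n s : ℕ} (G : GHGame n s)
    (f : (Fin n → Bool) → (Fin n → Bool) → Bool) : Prop :=
  ∀ x y, G.run x y = if f x y then GHState.exitB else GHState.exitA

/-- The garden-hose complexity of `f`: the minimal number of pipes of a
garden-hose game computing `f`. -/
noncomputable def GH {n : ℕ} (f : (Fin n → Bool) → (Fin n → Bool) → Bool) : ℕ :=
  sInf {s : ℕ | ∃ G : GHGame n s, G.Computes f}

/-- The majority function: `MAJ x y = 1` iff `Σ_i x_i y_i ≥ ⌈n/2⌉`. -/
def MAJfun (n : ℕ) (x y : Fin n → Bool) : Bool :=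
  decide ((n + 1) / 2 ≤ (Finset.univ.filter fun i => x i = true ∧ y i = true).card)

lemma maj_sep {n : ℕ} (y y' : Fin n → Bool) (i : Fin n)
    (hy : (n + 1) / 2 ≤ (Finset.univ.filter fun j => y j = true).card)
    (hi : y i = true) (hi' : y' i = false) :
    ∃ x, MAJfun n x y = true ∧ MAJfun n x y' = false := by
  classical
  set k := (n + 1) / 2 with hk
  have hn : 1 ≤ n := Nat.one_le_iff_ne_zero.mpr (by rintro rfl; exact i.elim0)
  have hk1 : 1 ≤ k := by omega
  have hik : i ∈ Finset.univ.filter fun j => y j = true := by simp [hi]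
  have hcard : k - 1 ≤ ((Finset.univ.filter fun j => y j = true) \ {i}).card := by
    rw [Finset.card_sdiff_of_subset (by simpa using hik)]
    simpa using Nat.sub_le_sub_right hy 1
  obtain ⟨T, hTsub, hTcard⟩ := Finset.exists_subset_card_eq hcard
  have hiT : i ∉ T := fun h => by simpa using (hTsub h)
  set S := insert i T with hS
  have hScard : S.card = k := by
    rw [hS, Finset.card_insert_of_notMem hiT, hTcard]; omega
  have hSsub : S ⊆ Finset.univ.filter fun j => y j = true := by
    intro j hj
    rcases Finset.mem_insert.mp hj with rfl | hj
    · exact hik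
    · exact (Finset.mem_sdiff.mp (hTsub hj)).1
  refine ⟨fun j => decide (j ∈ S), ?_, ?_⟩
  · unfold MAJfun
    have : (Finset.univ.filter fun j => (decide (j ∈ S)) = true ∧ y j = true) = S := by
      ext j
      simp only [Finset.mem_filter, Finset.mem_univ, true_and, decide_eq_true_eq]
      constructor
      · exact fun h => h.1
      · intro h
        exact ⟨h, by simpa using hSsub h⟩
    rw [this, hScard]
    simp [hk]
  · unfold MAJfun
    have hsub : (Finset.univ.filter fun j => (decide (j ∈ S)) = true ∧ y' j = true) ⊆ S.erase i := by
      intro j hj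
      simp only [Finset.mem_filter, Finset.mem_univ, true_and, decide_eq_true_eq] at hj
      refine Finset.mem_erase.mpr ⟨?_, hj.1⟩
      rintro rfl
      rw [hi'] at hj
      exact absurd hj.2 (by simp)
    have := Finset.card_le_card hsub
    rw [Finset.card_erase_of_mem (Finset.mem_insert_self _ _), hScard] at this
    simp only [decide_eq_true_eq, decide_eq_false_iff_not, not_le] at this ⊢
    omega
lemma ghStep_exitA {s : ℕ} (a : Fin (s + 1) → Option (Fin (s + 1)))
    (b : Fin s → Option (Fin s)) (m : ℕ) :
    (ghStep a b)^[m] GHState.exitA = GHState.exitA :=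
  Function.iterate_fixed rfl m

lemma ghStep_exitB {s : ℕ} (a : Fin (s + 1) → Option (Fin (s + 1)))
    (b : Fin s → Option (Fin s)) (m : ℕ) :
    (ghStep a b)^[m] GHState.exitB = GHState.exitB :=
  Function.iterate_fixed rfl m

lemma ghgame_exists {n : ℕ} (f : (Fin n → Bool) → (Fin n → Bool) → Bool) :
    ∃ s : ℕ, ∃ G : GHGame n s, G.Computes f := by
  classical
  set s := Fintype.card ((Fin n → Bool) × Bool) with hs
  refine ⟨s, ?_⟩
  set e : (Fin n → Bool) × Bool ≃ Fin s := Fintype.equivFin _ with he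
  set EA : (Fin n → Bool) → Fin (s + 1) → Option (Fin (s + 1)) := fun x v =>
    if v = 0 then some (e (x, false)).succ
    else if v = (e (x, false)).succ then some 0 else none with hEA
  set EB : (Fin n → Bool) → Fin s → Option (Fin s) := fun y p =>
    if f (e.symm p).1 y then none else some (e ((e.symm p).1, !(e.symm p).2)) with hEB
  have matchA : ∀ x, IsPartialMatching (EA x) := by
    intro x i j h
    have hk0 : (e (x, false)).succ ≠ (0 : Fin (s + 1)) := Fin.succ_ne_zero _
    simp only [hEA] at h ⊢
    by_cases hi0 : i = 0
    · subst hi0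
      rw [if_pos rfl] at h
      simp only [Option.some.injEq] at h
      subst h
      refine ⟨hk0.symm, ?_⟩
      rw [if_neg hk0, if_pos rfl]
    · rw [if_neg hi0] at h
      by_cases hik : i = (e (x, false)).succ
      · rw [if_pos hik] at h
        simp only [Option.some.injEq] at h
        subst h
        subst hik
        exact ⟨hk0, by rw [if_pos rfl]⟩
      · rw [if_neg hik] at h; exact absurd h (by simp)
  have matchB : ∀ y, IsPartialMatching (EB y) := by
    intro y p q h
    simp only [hEB] at h ⊢
    by_cases hf : f (e.symm p).1 y
    · rw [if_pos hf] at h; exact absurd h (by simp)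
    · rw [if_neg hf] at h
      simp only [Option.some.injEq] at h
      subst h
      constructor
      · intro hpq
        have := congrArg e.symm hpq
        rw [e.symm_apply_apply] at this
        have : (e.symm p).2 = !(e.symm p).2 := congrArg Prod.snd this
        simp at this
      · rw [e.symm_apply_apply]
        simp only [Bool.not_not, if_neg hf, Prod.mk.eta, e.apply_symm_apply]
  refine ⟨⟨EA, EB, matchA, matchB⟩, ?_⟩
  intro x y
  show ghResult (EA x) (EB y) = _
  have hstart : ghStart (EA x) = GHState.atBob (e (x, false)) := by
    unfold ghStart
    simp only [hEA, if_pos rfl]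
    unfold toPipe
    have h1 : ((e (x, false)).succ : ℕ) = (e (x, false) : ℕ) + 1 := Fin.val_succ _
    rw [dif_neg (by omega)]
    exact congrArg GHState.atBob (Fin.ext (by simp [h1]))
  unfold ghResult
  rw [hstart]
  rw [Function.iterate_add_apply]
  have hstep1 : ghStep (EA x) (EB y) (GHState.atBob (e (x, false))) =
      if f x y then GHState.exitB else GHState.atAlice (e (x, true)) := by
    show (match EB y (e (x, false)) with
      | none => GHState.exitB
      | some j => GHState.atAlice j) = _
    simp only [hEB, e.symm_apply_apply]
    by_cases hf : f x y <;> simp [hf]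
  by_cases hf : f x y
  · rw [if_pos hf]
    have : (ghStep (EA x) (EB y))^[2] (GHState.atBob (e (x, false))) = GHState.exitB := by
      rw [Function.iterate_succ_apply, hstep1, if_pos hf]
      rfl
    rw [this, ghStep_exitB]
  · rw [if_neg hf]
    have hne : (e (x, true)).succ ≠ (e (x, false)).succ := by
      intro h
      have := Fin.succ_injective _ h
      have := congrArg e.symm this
      simp only [e.symm_apply_apply, Prod.mk.injEq] at this
      exact absurd this.2 (by simp)
    have : (ghStep (EA x) (EB y))^[2] (GHState.atBob (e (x, false))) = GHState.exitA := by
      rw [Function.iterate_succ_apply, hstep1, if_neg hf]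
      show (match EA x (e (x, true)).succ with
        | none => GHState.exitA
        | some k => match toPipe k with
          | none => GHState.exitA
          | some p => GHState.atBob p) = _
      simp only [hEA, if_neg (Fin.succ_ne_zero _), if_neg hne]
    rw [this, ghStep_exitA]
open Finset in
lemma matching_count (s : ℕ) [DecidablePred (IsPartialMatching (V := Fin s))] :
    (Finset.univ.filter fun m : Fin s → Option (Fin s) => IsPartialMatching m).card ≤ s ^ s := by
  classical
  have hsub : (Finset.univ.filter fun m : Fin s → Option (Fin s) => IsPartialMatching m) ⊆
      (Finset.univ.filter fun m : Fin s → Option (Fin s) => ∀ i, ¬ m i = some i) := by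
    intro m hm
    simp only [Finset.mem_filter, Finset.mem_univ, true_and] at hm ⊢
    intro i hmi
    exact (hm i i hmi).1 rfl
  refine le_trans (Finset.card_le_card hsub) ?_
  have h1 : (Finset.univ.filter fun m : Fin s → Option (Fin s) => ∀ i, ¬ m i = some i).card
      = Fintype.card {m : Fin s → Option (Fin s) // ∀ i, ¬ m i = some i} :=
    (Fintype.card_subtype _).symm
  rw [h1, Fintype.card_congr (Equiv.subtypePiEquivPi
    (p := fun (i : Fin s) (o : Option (Fin s)) => ¬ o = some i)), Fintype.card_pi]
  have h2 : ∀ i : Fin s, Fintype.card {o : Option (Fin s) // ¬ o = some i} = s := by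
    intro i
    rw [Fintype.card_subtype_compl]
    simp [Fintype.card_subtype_eq]
  calc ∏ i : Fin s, Fintype.card {o : Option (Fin s) // ¬ o = some i}
      = ∏ _i : Fin s, s := by exact Finset.prod_congr rfl fun i _ => h2 i
    _ ≤ s ^ s := by simp
lemma maj_sep' {n : ℕ} (y y' : Fin n → Bool)
    (hy : (n + 1) / 2 ≤ (Finset.univ.filter fun j => y j = true).card)
    (hy' : (n + 1) / 2 ≤ (Finset.univ.filter fun j => y' j = true).card)
    (hne : y ≠ y') : ∃ x, MAJfun n x y ≠ MAJfun n x y' := by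
  have : ∃ i, y i ≠ y' i := by
    by_contra h
    push_neg at h
    exact hne (funext h)
  obtain ⟨i, hi⟩ := this
  cases h : y i
  · have h' : y' i = true := by
      cases hyi' : y' i
      · exact absurd (h.trans hyi'.symm) hi
      · rfl
    obtain ⟨x, hx1, hx2⟩ := maj_sep y' y i hy' h' h
    exact ⟨x, by rw [hx1, hx2]; simp⟩
  · have h' : y' i = false := by
      cases hyi' : y' i
      · rfl
      · exact absurd (h.trans hyi'.symm) hi
    obtain ⟨x, hx1, hx2⟩ := maj_sep y y' i hy h h'
    exact ⟨x, by rw [hx1, hx2]; simp⟩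

lemma gh_counting {n s : ℕ} (G : GHGame n s) (hG : G.Computes (MAJfun n)) :
    2 ^ n ≤ 2 * s ^ s := by
  classical
  set wt : (Fin n → Bool) → ℕ := fun y => (Finset.univ.filter fun j => y j = true).card with hwt
  set H : Finset (Fin n → Bool) := Finset.univ.filter (fun y => (n + 1) / 2 ≤ wt y) with hH
  have hwtc : ∀ y : Fin n → Bool, wt (fun j => !(y j)) = n - wt y := by
    intro y
    have h1 : (Finset.univ.filter fun j => (!(y j)) = true)
        = Finset.univ.filter fun j => ¬ (y j = true) := by
      apply Finset.filter_congr
      intro j _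
      simp
    simp only [hwt]
    rw [h1, Finset.filter_not, Finset.card_sdiff_of_subset (Finset.filter_subset _ _)]
    simp
  have hwtle : ∀ y : Fin n → Bool, wt y ≤ n := by
    intro y
    simpa [hwt] using Finset.card_le_card (Finset.filter_subset _ (Finset.univ : Finset (Fin n)))
  set φ : (Fin n → Bool) → (Fin n → Bool) :=
    fun y => if (n + 1) / 2 ≤ wt y then y else fun j => !(y j) with hφ
  -- φ maps into H
  have hφH : ∀ y, φ y ∈ H := by
    intro y
    by_cases h : (n + 1) / 2 ≤ wt y
    · simp [hφ, hH, h]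
    · have h2 := hwtc y
      have h3 := hwtle y
      simp only [hφ, hH, if_neg h, Finset.mem_filter, Finset.mem_univ, true_and]
      omega
  -- fibers of φ have size ≤ 2
  have hfiber : ∀ a ∈ Finset.univ.image φ,
      (Finset.univ.filter fun y => φ y = a).card ≤ 2 := by
    intro a _
    have hsub : (Finset.univ.filter fun y => φ y = a) ⊆ insert a {fun j => !(a j)} := by
      intro y hy
      simp only [Finset.mem_filter, Finset.mem_univ, true_and] at hy
      simp only [Finset.mem_insert, Finset.mem_singleton]
      by_cases h : (n + 1) / 2 ≤ wt y
      · left; rw [← hy]; simp [hφ, h]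
      · right
        have : (fun j => !(y j)) = a := by rw [← hy]; simp [hφ, h]
        funext j
        have := congrFun this j
        rw [← this, Bool.not_not]
    refine le_trans (Finset.card_le_card hsub) (le_trans (Finset.card_insert_le _ _) ?_)
    simp
  have h2n : 2 ^ n ≤ 2 * H.card := by
    have h1 := Finset.card_le_mul_card_image (f := φ) Finset.univ 2 hfiber
    have h2 : (Finset.univ.image φ) ⊆ H := by
      intro a ha
      obtain ⟨y, _, rfl⟩ := Finset.mem_image.mp ha
      exact hφH y
    have h3 : (Finset.univ : Finset (Fin n → Bool)).card = 2 ^ n := by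
      simp [Finset.card_univ]
    calc 2 ^ n = (Finset.univ : Finset (Fin n → Bool)).card := h3.symm
      _ ≤ 2 * (Finset.univ.image φ).card := h1
      _ ≤ 2 * H.card := by
          exact Nat.mul_le_mul_left 2 (Finset.card_le_card h2)
  -- H injects into partial matchings via G.EB
  have hinj : Set.InjOn G.EB H := by
    intro y hy y' hy' hEq
    by_contra hne
    simp only [hH, Finset.coe_filter, Set.mem_setOf_eq] at hy hy'
    obtain ⟨x, hx⟩ := maj_sep' y y' hy.2 hy'.2 hne
    have e1 := hG x y
    have e2 := hG x y'
    unfold GHGame.run at e1 e2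
    rw [hEq] at e1
    rw [e1] at e2
    revert hx
    cases hb : MAJfun n x y <;> cases hb' : MAJfun n x y' <;>
      rw [hb, hb'] at e2 <;> simp_all
  have hHcard : H.card ≤ s ^ s := by
    refine le_trans (Finset.card_le_card_of_injOn G.EB
      (fun y _ => ?_) hinj) (matching_count s)
    simp only [Finset.coe_filter, Finset.mem_univ, true_and, Set.mem_setOf_eq]
    exact G.matchB y
  omega
lemma gh_maj_real (n : ℕ) :
    (n : ℝ) - 1 ≤ (GH (MAJfun n) : ℝ) * Real.logb 2 (GH (MAJfun n)) := by
  have hrhs : (0 : ℝ) ≤ (GH (MAJfun n) : ℝ) * Real.logb 2 (GH (MAJfun n)) := by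
    rcases Nat.eq_zero_or_pos (GH (MAJfun n)) with h | h
    · simp [h]
    · exact mul_nonneg (by positivity)
        (Real.logb_nonneg one_lt_two (by exact_mod_cast h))
  by_cases hn : n ≤ 1
  · have : (n : ℝ) ≤ 1 := by exact_mod_cast hn
    linarith
  push_neg at hn
  set s := GH (MAJfun n) with hsdef
  have hne : {t : ℕ | ∃ G : GHGame n t, G.Computes (MAJfun n)}.Nonempty := by
    obtain ⟨t, G, hG⟩ := ghgame_exists (MAJfun n)
    exact ⟨t, G, hG⟩
  obtain ⟨G, hG⟩ : ∃ G : GHGame n s, G.Computes (MAJfun n) := Nat.sInf_mem hne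
  have hcount : 2 ^ n ≤ 2 * s ^ s := gh_counting G hG
  have h2 : 2 ^ (n - 1) ≤ s ^ s := by
    have hn1 : n - 1 + 1 = n := by omega
    have hpow : 2 ^ n = 2 * 2 ^ (n - 1) := by
      nth_rewrite 1 [← hn1]
      rw [pow_succ, mul_comm]
    rw [hpow] at hcount
    omega
  have hs2 : 2 ≤ s := by
    by_contra hs
    push_neg at hs
    have hss : s ^ s = 1 := by interval_cases s <;> simp
    have : 2 ≤ 2 ^ (n - 1) := by
      calc 2 = 2 ^ 1 := rfl
        _ ≤ 2 ^ (n - 1) := Nat.pow_le_pow_right (by norm_num) (by omega)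
    omega
  have hreal : ((2 : ℝ)) ^ (n - 1) ≤ (s : ℝ) ^ (s : ℕ) := by exact_mod_cast h2
  have hlog := Real.logb_le_logb_of_le one_lt_two (by positivity) hreal
  rw [Real.logb_pow, Real.logb_pow, Real.logb_self_eq_one one_lt_two, mul_one] at hlog
  have hcast : ((n - 1 : ℕ) : ℝ) = (n : ℝ) - 1 := by
    have : 1 ≤ n := by omega
    push_cast [this]
    ring
  rw [hcast] at hlog
  exact hlog

/-- `MAJ` is injective for Bob when restricted to inputs `y` of Hamming weight
at least `⌈n/2⌉`, and the garden-hose complexity `s = GH(MAJ)` satisfies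
`s · log₂ s ≥ n - 1`; hence `GH(MAJ) ∈ Ω(n / log n)`. -/
theorem gh_maj_lower_bound (n : ℕ) :
    (∀ y y' : Fin n → Bool,
      (n + 1) / 2 ≤ (Finset.univ.filter fun i => y i = true).card →
      (n + 1) / 2 ≤ (Finset.univ.filter fun i => y' i = true).card →
      y ≠ y' → ∃ x, MAJfun n x y ≠ MAJfun n x y') ∧
    (n : ℝ) - 1 ≤ (GH (MAJfun n) : ℝ) * Real.logb 2 (GH (MAJfun n)) ∧
    ∃ C : ℝ, 0 < C ∧ ∀ m : ℕ, 2 ≤ m →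
      C * ((m : ℝ) / Real.logb 2 m) ≤ (GH (MAJfun m) : ℝ) := by
  refine ⟨fun y y' hy hy' hne => maj_sep' y y' hy hy' hne, gh_maj_real n,
    ⟨1 / 2, by norm_num, ?_⟩⟩
  intro m hm
  set s := GH (MAJfun m) with hs
  have hb := gh_maj_real m
  have hm1 : (2 : ℝ) ≤ (m : ℝ) := by exact_mod_cast hm
  have hL : (1 : ℝ) ≤ Real.logb 2 (m : ℝ) := by
    rw [show (1 : ℝ) = Real.logb 2 2 from (Real.logb_self_eq_one one_lt_two).symm]
    exact Real.logb_le_logb_of_le one_lt_two (by norm_num) hm1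
  have hLpos : (0 : ℝ) < Real.logb 2 (m : ℝ) := lt_of_lt_of_le one_pos hL
  by_cases hsm : (s : ℝ) ≤ (m : ℝ)
  · have hlogs : Real.logb 2 (s : ℝ) ≤ Real.logb 2 (m : ℝ) := by
      rcases Nat.eq_zero_or_pos s with h | h
      · rw [h]
        simp only [Nat.cast_zero, Real.logb_zero]
        linarith
      · exact Real.logb_le_logb_of_le one_lt_two (by exact_mod_cast h) hsm
    have h1 : (m : ℝ) - 1 ≤ (s : ℝ) * Real.logb 2 (m : ℝ) :=
      le_trans hb (mul_le_mul_of_nonneg_left hlogs (Nat.cast_nonneg s))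
    calc (1 : ℝ) / 2 * ((m : ℝ) / Real.logb 2 (m : ℝ))
        = ((m : ℝ) / 2) / Real.logb 2 (m : ℝ) := by ring
      _ ≤ (s : ℝ) := by
          rw [div_le_iff₀ hLpos]
          linarith
  · push_neg at hsm
    calc (1 : ℝ) / 2 * ((m : ℝ) / Real.logb 2 (m : ℝ))
        ≤ 1 * ((m : ℝ) / Real.logb 2 (m : ℝ)) := by
          apply mul_le_mul_of_nonneg_right (by norm_num)
          positivity
      _ = (m : ℝ) / Real.logb 2 (m : ℝ) := one_mul _
      _ ≤ (m : ℝ) := div_le_self (by linarith) hL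
      _ ≤ (s : ℝ) := le_of_lt hsm
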